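/- arXiv:hep-ph/9306290 — 5 statements merged into one kernel-verified Lean document; each statement's English description precedes it below -/
import Mathlib

section
/- Assume M₁ ≥ 0, M₂ ≥ 0, M_φ² ≥ 0, |M′²| ≤ M₁·M₂ and |μ²| ≤ M_φ². Then V₀(Δ, Δbar, Δc, Δbarc, κ, κ′) ≥ 0 for every choice of 2×2 complex matrices Δ, Δbar, Δc, Δbarc and complex numbers κ, κ′ (where M₁² and M₂² in V₀ are the squares of M₁ and M₂). -/
open Matrix

/-- The Pauli matrices `τ₁, τ₂, τ₃`. -/
noncomputable def pauli : Fin 3 → Matrix (Fin 2) (Fin 2) ℂ :=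
  ![!![0, 1; 1, 0], !![0, -Complex.I; Complex.I, 0], !![1, 0; 0, -1]]

/-- The diagonal bidoublet VEV `Φ = diag(κ, κ')`. -/
noncomputable def PhiM (κ κ' : ℂ) : Matrix (Fin 2) (Fin 2) ℂ := !![κ, 0; 0, κ']

/-- The tree-level Higgs potential of the minimal SUSY left-right model with vanishing
slepton fields, in terms of the triplet fields `Δ, Δbar, Δc, Δbarc` and the diagonal
bidoublet entries `κ, κ'`.  The parameters `M1sq, M2sq, Mpsq (= M′²), Mphisq, musq`
are arbitrary reals and `g, g'` are the gauge couplings. -/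
noncomputable def V0 (M1sq M2sq Mpsq Mphisq musq g g' : ℝ)
    (Δ Δbar Δc Δbarc : Matrix (Fin 2) (Fin 2) ℂ) (κ κ' : ℂ) : ℝ :=
  M1sq * ((Δᴴ * Δ).trace + (Δcᴴ * Δc).trace).re
  + M2sq * ((Δbarᴴ * Δbar).trace + (Δbarcᴴ * Δbarc).trace).re
  + 2 * Mpsq * ((Δ * Δbar).trace + (Δc * Δbarc).trace).re
  + Mphisq * (‖κ‖ ^ 2 + ‖κ'‖ ^ 2)
  + 2 * musq * (κ * κ').re
  + g ^ 2 / 8 * ∑ m : Fin 3,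
      ‖((2 : ℂ) • (Δᴴ * pauli m * Δ) + (2 : ℂ) • (Δbarᴴ * pauli m * Δbar)
        + (PhiM κ κ')ᴴ * pauli m * PhiM κ κ').trace‖ ^ 2
  + g ^ 2 / 8 * ∑ m : Fin 3,
      ‖((2 : ℂ) • (Δcᴴ * pauli m * Δc) + (2 : ℂ) • (Δbarcᴴ * pauli m * Δbarc)
        + PhiM κ κ' * (pauli m)ᵀ * (PhiM κ κ')ᴴ).trace‖ ^ 2
  + g' ^ 2 / 8 * ‖(2 : ℂ) * ((Δᴴ * Δ).trace - (Δcᴴ * Δc).trace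
      - (Δbarᴴ * Δbar).trace + (Δbarcᴴ * Δbarc).trace)‖ ^ 2

section Aux

/-- Eight-dimensional Cauchy–Schwarz inequality. -/
lemma cs8 (a1 a2 a3 a4 a5 a6 a7 a8 b1 b2 b3 b4 b5 b6 b7 b8 : ℝ) :
    (a1*b1+a2*b2+a3*b3+a4*b4+a5*b5+a6*b6+a7*b7+a8*b8)^2 ≤
    (a1^2+a2^2+a3^2+a4^2+a5^2+a6^2+a7^2+a8^2)*(b1^2+b2^2+b3^2+b4^2+b5^2+b6^2+b7^2+b8^2) := by
  have h := Finset.sum_mul_sq_le_sq_mul_sq Finset.univ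
    (![a1,a2,a3,a4,a5,a6,a7,a8] : Fin 8 → ℝ) ![b1,b2,b3,b4,b5,b6,b7,b8]
  simpa [Fin.sum_univ_eight, mul_comm, mul_pow] using h

lemma trace_self_nonneg (A : Matrix (Fin 2) (Fin 2) ℂ) : 0 ≤ ((Aᴴ * A).trace).re := by
  simp only [Matrix.trace, Matrix.mul_apply, Fin.sum_univ_two, Matrix.conjTranspose_apply,
    Matrix.diag_apply, Complex.add_re, Complex.mul_re, RCLike.star_def,
    Complex.conj_re, Complex.conj_im]
  nlinarith [sq_nonneg (A 0 0).re, sq_nonneg (A 0 0).im, sq_nonneg (A 0 1).re, sq_nonneg (A 0 1).im,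
    sq_nonneg (A 1 0).re, sq_nonneg (A 1 0).im, sq_nonneg (A 1 1).re, sq_nonneg (A 1 1).im]

set_option maxHeartbeats 1000000 in
/-- Cauchy–Schwarz for the real part of the trace of a product of 2×2 matrices. -/
lemma csM (A B : Matrix (Fin 2) (Fin 2) ℂ) :
    (((A * B).trace).re)^2 ≤ ((Aᴴ * A).trace).re * ((Bᴴ * B).trace).re := by
  have h := cs8 (A 0 0).re (A 0 0).im (A 0 1).re (A 0 1).im (A 1 0).re (A 1 0).im (A 1 1).re (A 1 1).im
    (B 0 0).re (-(B 0 0).im) (B 1 0).re (-(B 1 0).im) (B 0 1).re (-(B 0 1).im) (B 1 1).re (-(B 1 1).im)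
  simp only [Matrix.trace, Matrix.mul_apply, Fin.sum_univ_two, Matrix.conjTranspose_apply,
    Matrix.diag_apply, Complex.add_re, Complex.mul_re, RCLike.star_def,
    Complex.conj_re, Complex.conj_im]
  ring_nf
  ring_nf at h
  linarith [h]

lemma key (P Q m a b c : ℝ) (hP : 0 ≤ P) (hQ : 0 ≤ Q) (hm : m^2 ≤ P*Q)
    (ha : 0 ≤ a) (hb : 0 ≤ b) (hc : c^2 ≤ a*b) : 0 ≤ P*a + Q*b + 2*m*c := by
  have hS : 0 ≤ P*a + Q*b := add_nonneg (mul_nonneg hP ha) (mul_nonneg hQ hb)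
  have t1 : 0 ≤ (P*Q - m^2)*(a*b) := mul_nonneg (by linarith) (mul_nonneg ha hb)
  have t2 : 0 ≤ m^2*(a*b - c^2) := mul_nonneg (sq_nonneg m) (by linarith)
  have h1 : (2*m*c)^2 ≤ (P*a+Q*b)^2 := by nlinarith [sq_nonneg (P*a - Q*b)]
  nlinarith [h1, hS]

end Aux

set_option maxHeartbeats 1000000 in
/-- If `M₁ ≥ 0`, `M₂ ≥ 0`, `M_φ² ≥ 0`, `|M′²| ≤ M₁M₂` and `|μ²| ≤ M_φ²`, then the
tree-level Higgs potential (with `M₁², M₂²` the squares of `M₁, M₂`) is nonnegative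
for every field configuration. -/
theorem V0_nonneg (M1 M2 Mpsq Mphisq musq g g' : ℝ)
    (h1 : 0 ≤ M1) (h2 : 0 ≤ M2) (h3 : 0 ≤ Mphisq)
    (h4 : |Mpsq| ≤ M1 * M2) (h5 : |musq| ≤ Mphisq) :
    ∀ (Δ Δbar Δc Δbarc : Matrix (Fin 2) (Fin 2) ℂ) (κ κ' : ℂ),
      0 ≤ V0 (M1 ^ 2) (M2 ^ 2) Mpsq Mphisq musq g g' Δ Δbar Δc Δbarc κ κ' := by
  intro Δ Δbar Δc Δbarc κ κ'
  have hm : Mpsq^2 ≤ M1^2 * M2^2 := by nlinarith [sq_abs Mpsq, abs_nonneg Mpsq]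
  have hmu : musq^2 ≤ Mphisq * Mphisq := by nlinarith [sq_abs musq, abs_nonneg musq]
  have k1 := key (M1^2) (M2^2) Mpsq _ _ _ (sq_nonneg M1) (sq_nonneg M2) hm
    (trace_self_nonneg Δ) (trace_self_nonneg Δbar) (csM Δ Δbar)
  have k2 := key (M1^2) (M2^2) Mpsq _ _ _ (sq_nonneg M1) (sq_nonneg M2) hm
    (trace_self_nonneg Δc) (trace_self_nonneg Δbarc) (csM Δc Δbarc)
  have hcs : ((κ * κ').re)^2 ≤ (‖κ‖ ^ 2) * (‖κ'‖ ^ 2) := by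
    have h := Complex.abs_re_le_norm (κ * κ')
    rw [norm_mul] at h
    nlinarith [abs_nonneg (κ * κ').re, norm_nonneg κ, norm_nonneg κ',
      sq_abs (κ * κ').re]
  have k3 := key Mphisq Mphisq musq _ _ _ h3 h3 hmu (by positivity) (by positivity) hcs
  have g1 : 0 ≤ g ^ 2 / 8 * ∑ m : Fin 3,
      ‖((2 : ℂ) • (Δᴴ * pauli m * Δ) + (2 : ℂ) • (Δbarᴴ * pauli m * Δbar)
        + (PhiM κ κ')ᴴ * pauli m * PhiM κ κ').trace‖ ^ 2 := by positivity
  have g2 : 0 ≤ g ^ 2 / 8 * ∑ m : Fin 3,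
      ‖((2 : ℂ) • (Δcᴴ * pauli m * Δc) + (2 : ℂ) • (Δbarcᴴ * pauli m * Δbarc)
        + PhiM κ κ' * (pauli m)ᵀ * (PhiM κ κ')ᴴ).trace‖ ^ 2 := by positivity
  have g3 : 0 ≤ g' ^ 2 / 8 * ‖(2 : ℂ) * ((Δᴴ * Δ).trace - (Δcᴴ * Δc).trace
      - (Δbarᴴ * Δbar).trace + (Δbarcᴴ * Δbarc).trace)‖ ^ 2 := by positivity
  unfold V0
  simp only [Complex.add_re]
  nlinarith [k1, k2, k3, g1, g2, g3]
end

section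
/- Assume M₁ > 0, M₂ > 0, M_φ² > 0, |M′²| < M₁·M₂ and |μ²| < M_φ² (with M₁² and M₂² in V₀ the squares of M₁ and M₂). Then V₀(Δ, Δbar, Δc, Δbarc, κ, κ′) = 0 if and only if Δ = Δbar = Δc = Δbarc = 0 and κ = κ′ = 0. Consequently the absolute minimum of V₀ is attained exactly at the trivial, parity-conserving configuration in which all triplet and bidoublet fields vanish. -/
open Matrix

private lemma pair_nonneg (M1 M2 Mpsq : ℝ)
    (h4 : |Mpsq| < M1 * M2) (a b : ℂ) :
    0 ≤ M1^2 * Complex.normSq a + M2^2 * Complex.normSq b + 2*Mpsq*(a*b).re := by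
  have hs : ‖a‖ ^ 2 = Complex.normSq a := Complex.sq_norm a
  have hu : ‖b‖ ^ 2 = Complex.normSq b := Complex.sq_norm b
  have hx : |(a*b).re| ≤ ‖a‖ * ‖b‖ := by
    calc |(a*b).re| ≤ ‖a*b‖ := Complex.abs_re_le_norm _
    _ = _ := norm_mul a b
  have hb : |Mpsq * (a*b).re| ≤ |Mpsq| * (‖a‖ * ‖b‖) := by
    rw [abs_mul]
    exact mul_le_mul_of_nonneg_left hx (abs_nonneg _)
  have h1' := neg_abs_le (Mpsq * (a*b).re)
  nlinarith [sq_nonneg (M1 * ‖a‖ - M2 * ‖b‖),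
    mul_nonneg (norm_nonneg a) (norm_nonneg b),
    mul_le_mul_of_nonneg_right h4.le (mul_nonneg (norm_nonneg a) (norm_nonneg b))]

private lemma pair_zero (M1 M2 Mpsq : ℝ) (h1 : 0 < M1) (h2 : 0 < M2)
    (h4 : |Mpsq| < M1 * M2) (a b : ℂ)
    (h : M1^2 * Complex.normSq a + M2^2 * Complex.normSq b + 2*Mpsq*(a*b).re = 0) :
    a = 0 ∧ b = 0 := by
  have hs : ‖a‖ ^ 2 = Complex.normSq a := Complex.sq_norm a
  have hu : ‖b‖ ^ 2 = Complex.normSq b := Complex.sq_norm b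
  have hx : |(a*b).re| ≤ ‖a‖ * ‖b‖ := by
    calc |(a*b).re| ≤ ‖a*b‖ := Complex.abs_re_le_norm _
    _ = _ := norm_mul a b
  have hb : |Mpsq * (a*b).re| ≤ |Mpsq| * (‖a‖ * ‖b‖) := by
    rw [abs_mul]
    exact mul_le_mul_of_nonneg_left hx (abs_nonneg _)
  have h1' := neg_abs_le (Mpsq * (a*b).re)
  have hsu : ‖a‖ * ‖b‖ = 0 := by
    nlinarith [sq_nonneg (M1 * ‖a‖ - M2 * ‖b‖),
      mul_nonneg (norm_nonneg a) (norm_nonneg b)]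
  have heq : M1 * ‖a‖ - M2 * ‖b‖ = 0 := by
    nlinarith [sq_nonneg (M1 * ‖a‖ - M2 * ‖b‖)]
  have ha : ‖a‖ = 0 := by
    rcases mul_eq_zero.mp hsu with h' | h'
    · exact h'
    · nlinarith [norm_nonneg a]
  have hbz : ‖b‖ = 0 := by nlinarith
  exact ⟨norm_eq_zero.mp ha, norm_eq_zero.mp hbz⟩

private lemma quad_expand (M1 M2 Mpsq : ℝ) (Δ Δbar : Matrix (Fin 2) (Fin 2) ℂ) :
    M1^2 * ((Δᴴ*Δ).trace).re + M2^2 * ((Δbarᴴ*Δbar).trace).re + 2*Mpsq*((Δ*Δbar).trace).re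
    = (M1^2 * Complex.normSq (Δ 0 0) + M2^2 * Complex.normSq (Δbar 0 0) + 2*Mpsq*(Δ 0 0 * Δbar 0 0).re)
    + (M1^2 * Complex.normSq (Δ 0 1) + M2^2 * Complex.normSq (Δbar 1 0) + 2*Mpsq*(Δ 0 1 * Δbar 1 0).re)
    + (M1^2 * Complex.normSq (Δ 1 0) + M2^2 * Complex.normSq (Δbar 0 1) + 2*Mpsq*(Δ 1 0 * Δbar 0 1).re)
    + (M1^2 * Complex.normSq (Δ 1 1) + M2^2 * Complex.normSq (Δbar 1 1) + 2*Mpsq*(Δ 1 1 * Δbar 1 1).re) := by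
  simp [Matrix.trace, Matrix.mul_apply, Matrix.conjTranspose_apply, Fin.sum_univ_two,
    Matrix.diag, Complex.add_re, Complex.normSq_apply, Complex.mul_re]
  ring

private lemma quad_nonneg (M1 M2 Mpsq : ℝ)
    (h4 : |Mpsq| < M1 * M2) (Δ Δbar : Matrix (Fin 2) (Fin 2) ℂ) :
    0 ≤ M1^2 * ((Δᴴ*Δ).trace).re + M2^2 * ((Δbarᴴ*Δbar).trace).re
      + 2*Mpsq*((Δ*Δbar).trace).re := by
  rw [quad_expand]
  have p1 := pair_nonneg M1 M2 Mpsq h4 (Δ 0 0) (Δbar 0 0)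
  have p2 := pair_nonneg M1 M2 Mpsq h4 (Δ 0 1) (Δbar 1 0)
  have p3 := pair_nonneg M1 M2 Mpsq h4 (Δ 1 0) (Δbar 0 1)
  have p4 := pair_nonneg M1 M2 Mpsq h4 (Δ 1 1) (Δbar 1 1)
  linarith

private lemma quad_zero (M1 M2 Mpsq : ℝ) (h1 : 0 < M1) (h2 : 0 < M2)
    (h4 : |Mpsq| < M1 * M2) (Δ Δbar : Matrix (Fin 2) (Fin 2) ℂ)
    (h : M1^2 * ((Δᴴ*Δ).trace).re + M2^2 * ((Δbarᴴ*Δbar).trace).re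
      + 2*Mpsq*((Δ*Δbar).trace).re = 0) :
    Δ = 0 ∧ Δbar = 0 := by
  rw [quad_expand] at h
  have p1 := pair_nonneg M1 M2 Mpsq h4 (Δ 0 0) (Δbar 0 0)
  have p2 := pair_nonneg M1 M2 Mpsq h4 (Δ 0 1) (Δbar 1 0)
  have p3 := pair_nonneg M1 M2 Mpsq h4 (Δ 1 0) (Δbar 0 1)
  have p4 := pair_nonneg M1 M2 Mpsq h4 (Δ 1 1) (Δbar 1 1)
  have q1 := pair_zero M1 M2 Mpsq h1 h2 h4 (Δ 0 0) (Δbar 0 0) (by linarith)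
  have q2 := pair_zero M1 M2 Mpsq h1 h2 h4 (Δ 0 1) (Δbar 1 0) (by linarith)
  have q3 := pair_zero M1 M2 Mpsq h1 h2 h4 (Δ 1 0) (Δbar 0 1) (by linarith)
  have q4 := pair_zero M1 M2 Mpsq h1 h2 h4 (Δ 1 1) (Δbar 1 1) (by linarith)
  constructor <;> (ext i j; fin_cases i <;> fin_cases j <;>
    simp [q1.1, q1.2, q2.1, q2.2, q3.1, q3.2, q4.1, q4.2])

/-- If `M₁ > 0`, `M₂ > 0`, `M_φ² > 0`, `|M′²| < M₁M₂` and `|μ²| < M_φ²`, then the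
tree-level Higgs potential (with `M₁², M₂²` the squares of `M₁, M₂`) vanishes exactly
at the trivial, parity-conserving configuration where all triplet and bidoublet fields
are zero; by nonnegativity this is the absolute minimum. -/
theorem V0_eq_zero_iff_trivial (M1 M2 Mpsq Mphisq musq g g' : ℝ)
    (h1 : 0 < M1) (h2 : 0 < M2) (h3 : 0 < Mphisq)
    (h4 : |Mpsq| < M1 * M2) (h5 : |musq| < Mphisq) :
    ∀ (Δ Δbar Δc Δbarc : Matrix (Fin 2) (Fin 2) ℂ) (κ κ' : ℂ),
      V0 (M1 ^ 2) (M2 ^ 2) Mpsq Mphisq musq g g' Δ Δbar Δc Δbarc κ κ' = 0 ↔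
        Δ = 0 ∧ Δbar = 0 ∧ Δc = 0 ∧ Δbarc = 0 ∧ κ = 0 ∧ κ' = 0 := by
  intro Δ Δbar Δc Δbarc κ κ'
  -- square-root parameters for the bidoublet mass term
  set S := Real.sqrt Mphisq with hS
  have hSpos : 0 < S := Real.sqrt_pos.mpr h3
  have hSsq : S ^ 2 = Mphisq := Real.sq_sqrt h3.le
  have hSmul : S * S = Mphisq := Real.mul_self_sqrt h3.le
  have h5' : |musq| < S * S := by rw [hSmul]; exact h5
  -- the pieces
  set QL := M1^2 * ((Δᴴ*Δ).trace).re + M2^2 * ((Δbarᴴ*Δbar).trace).re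
      + 2*Mpsq*((Δ*Δbar).trace).re with hQL
  set QR := M1^2 * ((Δcᴴ*Δc).trace).re + M2^2 * ((Δbarcᴴ*Δbarc).trace).re
      + 2*Mpsq*((Δc*Δbarc).trace).re with hQR
  set QP := S^2 * Complex.normSq κ + S^2 * Complex.normSq κ' + 2*musq*(κ*κ').re with hQP
  set G1 := g ^ 2 / 8 * ∑ m : Fin 3,
      ‖((2 : ℂ) • (Δᴴ * pauli m * Δ) + (2 : ℂ) • (Δbarᴴ * pauli m * Δbar)
        + (PhiM κ κ')ᴴ * pauli m * PhiM κ κ').trace‖ ^ 2 with hG1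
  set G2 := g ^ 2 / 8 * ∑ m : Fin 3,
      ‖((2 : ℂ) • (Δcᴴ * pauli m * Δc) + (2 : ℂ) • (Δbarcᴴ * pauli m * Δbarc)
        + PhiM κ κ' * (pauli m)ᵀ * (PhiM κ κ')ᴴ).trace‖ ^ 2 with hG2
  set G3 := g' ^ 2 / 8 * ‖(2 : ℂ) * ((Δᴴ * Δ).trace - (Δcᴴ * Δc).trace
      - (Δbarᴴ * Δbar).trace + (Δbarcᴴ * Δbarc).trace)‖ ^ 2 with hG3
  have hsplit : V0 (M1 ^ 2) (M2 ^ 2) Mpsq Mphisq musq g g' Δ Δbar Δc Δbarc κ κ'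
      = QL + QR + QP + G1 + G2 + G3 := by
    rw [hQL, hQR, hQP, hG1, hG2, hG3]
    simp only [V0, Complex.add_re, hSsq, Complex.sq_norm]
    ring
  have hQLn : 0 ≤ QL := quad_nonneg M1 M2 Mpsq h4 Δ Δbar
  have hQRn : 0 ≤ QR := quad_nonneg M1 M2 Mpsq h4 Δc Δbarc
  have hQPn : 0 ≤ QP := pair_nonneg S S musq h5' κ κ'
  have hG1n : 0 ≤ G1 := by
    rw [hG1]
    apply mul_nonneg (by positivity)
    exact Finset.sum_nonneg fun m _ => sq_nonneg _
  have hG2n : 0 ≤ G2 := by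
    rw [hG2]
    apply mul_nonneg (by positivity)
    exact Finset.sum_nonneg fun m _ => sq_nonneg _
  have hG3n : 0 ≤ G3 := by rw [hG3]; positivity
  constructor
  · intro h
    rw [hsplit] at h
    have hQL0 : QL = 0 := by linarith
    have hQR0 : QR = 0 := by linarith
    have hQP0 : QP = 0 := by linarith
    obtain ⟨hd1, hd2⟩ := quad_zero M1 M2 Mpsq h1 h2 h4 Δ Δbar hQL0
    obtain ⟨hd3, hd4⟩ := quad_zero M1 M2 Mpsq h1 h2 h4 Δc Δbarc hQR0
    obtain ⟨hk1, hk2⟩ := pair_zero S S musq hSpos hSpos h5' κ κ' hQP0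
    exact ⟨hd1, hd2, hd3, hd4, hk1, hk2⟩
  · rintro ⟨rfl, rfl, rfl, rfl, rfl, rfl⟩
    have hP : PhiM 0 0 = 0 := by
      ext i j; fin_cases i <;> fin_cases j <;> simp [PhiM]
    simp [V0, hP]
end

section
/- For every real v, the configuration Δ = Δc = v·τ₁, Δbar = Δbarc = 0, κ = κ′ = 0 satisfies V₀ = 4·M₁²·v² (all D-terms vanish along this direction), and the configuration Δbar = Δbarc = v·τ₁, Δ = Δc = 0, κ = κ′ = 0 satisfies V₀ = 4·M₂²·v². Consequently, if V₀ is bounded from below over all configurations, then M₁² ≥ 0 and M₂² ≥ 0. -/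
open Matrix

/-- If `C ≤ 4 A v²` for every real `v`, then `A ≥ 0`. -/
lemma aux_nonneg_of_bounded (A C : ℝ) (h : ∀ v : ℝ, C ≤ 4 * A * v ^ 2) : 0 ≤ A := by
  by_contra hA
  push_neg at hA
  have hpos : 0 < (|C| + 1) / (-4 * A) :=
    div_pos (by positivity) (by linarith)
  have hv : (Real.sqrt ((|C| + 1) / (-4 * A))) ^ 2 = (|C| + 1) / (-4 * A) :=
    Real.sq_sqrt hpos.le
  have h1 := h (Real.sqrt ((|C| + 1) / (-4 * A)))
  rw [hv] at h1
  have hne : A ≠ 0 := hA.ne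
  have h2 : 4 * A * ((|C| + 1) / (-4 * A)) = -(|C| + 1) := by
    field_simp
  rw [h2] at h1
  nlinarith [neg_abs_le C]

/-- Along the D-flat direction `Δ = Δc = v·τ₁`, `Δbar = Δbarc = 0`, `κ = κ' = 0` the
potential equals `4M₁²v²`, and along `Δbar = Δbarc = v·τ₁`, `Δ = Δc = 0`, `κ = κ' = 0`
it equals `4M₂²v²`; hence if the potential is bounded from below then `M₁² ≥ 0` and
`M₂² ≥ 0`. -/
theorem V0_flat_directions_M1_M2 (M1sq M2sq Mpsq Mphisq musq g g' : ℝ) :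
    (∀ v : ℝ, V0 M1sq M2sq Mpsq Mphisq musq g g'
        ((v : ℂ) • pauli 0) 0 ((v : ℂ) • pauli 0) 0 0 0 = 4 * M1sq * v ^ 2) ∧
    (∀ v : ℝ, V0 M1sq M2sq Mpsq Mphisq musq g g'
        0 ((v : ℂ) • pauli 0) 0 ((v : ℂ) • pauli 0) 0 0 = 4 * M2sq * v ^ 2) ∧
    ((∃ C : ℝ, ∀ (Δ Δbar Δc Δbarc : Matrix (Fin 2) (Fin 2) ℂ) (κ κ' : ℂ),
        C ≤ V0 M1sq M2sq Mpsq Mphisq musq g g' Δ Δbar Δc Δbarc κ κ') →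
      0 ≤ M1sq ∧ 0 ≤ M2sq) := by
  have h1 : ∀ v : ℝ, V0 M1sq M2sq Mpsq Mphisq musq g g'
      ((v : ℂ) • pauli 0) 0 ((v : ℂ) • pauli 0) 0 0 0 = 4 * M1sq * v ^ 2 := by
    intro v
    simp [V0, pauli, PhiM, Fin.sum_univ_three, Matrix.trace_fin_two, Matrix.mul_apply,
      Fin.sum_univ_succ, Matrix.conjTranspose_apply, Matrix.vecMul, dotProduct,
      Matrix.transpose_apply]
    ring_nf
  have h2 : ∀ v : ℝ, V0 M1sq M2sq Mpsq Mphisq musq g g'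
      0 ((v : ℂ) • pauli 0) 0 ((v : ℂ) • pauli 0) 0 0 = 4 * M2sq * v ^ 2 := by
    intro v
    simp [V0, pauli, PhiM, Fin.sum_univ_three, Matrix.trace_fin_two, Matrix.mul_apply,
      Fin.sum_univ_succ, Matrix.conjTranspose_apply, Matrix.vecMul, dotProduct,
      Matrix.transpose_apply]
    ring_nf
  refine ⟨h1, h2, ?_⟩
  rintro ⟨C, hC⟩
  constructor
  · exact aux_nonneg_of_bounded M1sq C (fun v => (h1 v) ▸ hC _ _ _ _ _ _)
  · exact aux_nonneg_of_bounded M2sq C (fun v => (h2 v) ▸ hC _ _ _ _ _ _)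
end

section
/- Suppose M₁ > 0, M₂ > 0 (with M₁², M₂² in V₀ the squares of M₁, M₂), M′² = M₁·M₂ and μ² = M_φ². Then for every real v and every real κ, the nontrivial configuration Δ = Δc = (v/M₁)·τ₁, Δbar = Δbarc = −(v/M₂)·τ₁, κ′ = −κ satisfies V₀ = 0; i.e. on this hypersurface of the parameter space the potential has a flat direction of vacua with nonzero, electric-charge-violating but parity-conserving field values. -/
open Matrix

/-- On the hypersurface `M′² = M₁M₂`, `μ² = M_φ²` of the parameter space (with
`M₁ > 0`, `M₂ > 0` and `M₁², M₂²` the squares of `M₁, M₂`), for every real `v` and `κ`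
the nontrivial, electric-charge-violating but parity-conserving configuration
`Δ = Δc = (v/M₁)τ₁`, `Δbar = Δbarc = −(v/M₂)τ₁`, `κ' = −κ` satisfies `V₀ = 0`:
the potential has a flat direction of vacua. -/
theorem V0_flat_vacua_on_hypersurface (M1 M2 Mphisq g g' : ℝ)
    (h1 : 0 < M1) (h2 : 0 < M2) :
    ∀ v κ : ℝ,
      V0 (M1 ^ 2) (M2 ^ 2) (M1 * M2) Mphisq Mphisq g g'
        (((v / M1 : ℝ) : ℂ) • pauli 0) ((-(v / M2 : ℝ) : ℂ) • pauli 0)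
        (((v / M1 : ℝ) : ℂ) • pauli 0) ((-(v / M2 : ℝ) : ℂ) • pauli 0)
        (κ : ℂ) (-(κ : ℂ)) = 0 := by
  intro v κ
  have hp0 : pauli 0 = !![0, 1; 1, 0] := rfl
  have hp1 : pauli 1 = !![0, -Complex.I; Complex.I, 0] := rfl
  have hp2 : pauli 2 = !![1, 0; 0, -1] := rfl
  have hct : ∀ a b c d : ℂ, (!![a, b; c, d])ᴴ = !![starRingEnd ℂ a, starRingEnd ℂ c;
      starRingEnd ℂ b, starRingEnd ℂ d] := by
    intro a b c d; ext i j; fin_cases i <;> fin_cases j <;> simp [Matrix.conjTranspose_apply]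
  have htr : ∀ a b c d : ℂ, (!![a, b; c, d])ᵀ = !![a, c; b, d] := by
    intro a b c d; ext i j; fin_cases i <;> fin_cases j <;> simp
  have hsm : ∀ z a b c d : ℂ, z • !![a, b; c, d] = !![z*a, z*b; z*c, z*d] := by
    intro z a b c d; ext i j; fin_cases i <;> fin_cases j <;> simp [Matrix.smul_apply]
  have hadd : ∀ a b c d a' b' c' d' : ℂ,
      !![a, b; c, d] + !![a', b'; c', d'] = !![a+a', b+b'; c+c', d+d'] := by
    intro a b c d a' b' c' d'; ext i j; fin_cases i <;> fin_cases j <;> simp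
  simp only [V0, hp0, hp1, hp2, PhiM, hct, htr, hsm, Fin.sum_univ_three,
    Matrix.mul_fin_two, hadd, Matrix.trace_fin_two_of, map_ofNat, map_zero,
    _root_.map_one, Complex.conj_ofReal, smul_eq_mul]
  simp only [map_neg, Complex.conj_ofReal, mul_zero, zero_mul, mul_one, one_mul,
    mul_neg, neg_mul, neg_neg, add_zero, zero_add, neg_zero, map_zero, _root_.map_one]
  push_cast
  ring_nf
  simp only [map_zero, norm_zero, Complex.norm_real, Real.norm_eq_abs, Complex.ofReal_re, Complex.mul_re,
    Complex.ofReal_im, Complex.re_ofNat, Complex.im_ofNat]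
  ring_nf
  simp only [norm_neg, Complex.norm_real, Real.norm_eq_abs, ← Complex.ofReal_pow,
    ← Complex.ofReal_inv, ← Complex.ofReal_ofNat, ← Complex.ofReal_mul,
    ← Complex.ofReal_neg, Complex.ofReal_re, Complex.ofReal_im, sq_abs,
    mul_zero, sub_zero]
  field_simp
  ring
end

section
/- Assume v² − 4f²m_l² > 0, M² < M₂² and h ≠ 0. Let V_PBS := −f²·(1 − M²/M₂²)·L² with L := (v² − 4f²m_l²)·M₂²/(8f⁴·(M₂² − M²)) be the value of V₁ at the parity-breaking critical point, and let V_PPS := −2·(f²·(1 − M²/M₂²) + h²/2)·K² with K := (v² − 4f²m_l²)·M₂²/(8f⁴·(M₂²·(1 + h²/(2f²)) − M²)) be the value of V₁ at the parity-preserving critical point. Then V_PBS < V_PPS if and only if h²·M₂² > 2·f²·(M₂² − M²). In particular, for h²·M₂² > 2f²(M₂² − M²) the parity-breaking solution lies lower than the parity-preserving one. -/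
/-- The simplified tree-level Higgs potential of the minimal SUSY left-right model in
the limit of small gauge and bidoublet couplings, with all fields real:
`V₁(l, l', δ, δ', δbar, δbar') = m_l²(l'² + l²) + M₂²(δbar'² + δbar²) + f²(l'⁴ + l⁴)
 + 4f²(l'²δ'² + l²δ²) + h²l'²l² + 2v(l'²δ' + l²δ) + 2fM(l'²δbar' + l²δbar)`. -/
noncomputable def V1 (mlsq M2 f M v h : ℝ) (l l' δ δ' δbar δbar' : ℝ) : ℝ :=
  mlsq * (l' ^ 2 + l ^ 2) + M2 ^ 2 * (δbar' ^ 2 + δbar ^ 2) + f ^ 2 * (l' ^ 4 + l ^ 4)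
  + 4 * f ^ 2 * (l' ^ 2 * δ' ^ 2 + l ^ 2 * δ ^ 2) + h ^ 2 * l' ^ 2 * l ^ 2
  + 2 * v * (l' ^ 2 * δ' + l ^ 2 * δ) + 2 * f * M * (l' ^ 2 * δbar' + l ^ 2 * δbar)
/-- Comparison of the two critical values: with
`V_PBS = −f²(1 − M²/M₂²)L²`, `L = (v² − 4f²m_l²)M₂²/(8f⁴(M₂² − M²))`, and
`V_PPS = −2(f²(1 − M²/M₂²) + h²/2)K²`,
`K = (v² − 4f²m_l²)M₂²/(8f⁴(M₂²(1 + h²/(2f²)) − M²))`, one has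
`V_PBS < V_PPS ↔ h²M₂² > 2f²(M₂² − M²)`: the parity-breaking solution lies lower than
the parity-preserving one exactly when `h²M₂² > 2f²(M₂² − M²)`. -/
theorem parity_breaking_below_parity_preserving_iff (mlsq M2 f M v h L K VPBS VPPS : ℝ)
    (hf : f ≠ 0) (hM2 : 0 < M2) (hh : h ≠ 0)
    (hpos : 0 < v ^ 2 - 4 * f ^ 2 * mlsq) (hMM : M ^ 2 < M2 ^ 2)
    (hL : L = (v ^ 2 - 4 * f ^ 2 * mlsq) * M2 ^ 2 / (8 * f ^ 4 * (M2 ^ 2 - M ^ 2)))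
    (hK : K = (v ^ 2 - 4 * f ^ 2 * mlsq) * M2 ^ 2 /
      (8 * f ^ 4 * (M2 ^ 2 * (1 + h ^ 2 / (2 * f ^ 2)) - M ^ 2)))
    (hVPBS : VPBS = -f ^ 2 * (1 - M ^ 2 / M2 ^ 2) * L ^ 2)
    (hVPPS : VPPS = -2 * (f ^ 2 * (1 - M ^ 2 / M2 ^ 2) + h ^ 2 / 2) * K ^ 2) :
    VPBS < VPPS ↔ h ^ 2 * M2 ^ 2 > 2 * f ^ 2 * (M2 ^ 2 - M ^ 2) := by
  have hf2 : (0:ℝ) < f ^ 2 := by positivity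
  have hD : 0 < M2 ^ 2 - M ^ 2 := by linarith
  have hM2' : (M2 : ℝ) ^ 2 ≠ 0 := by positivity
  have hD' : M2 ^ 2 - M ^ 2 ≠ 0 := ne_of_gt hD
  have hB : VPBS = -((v ^ 2 - 4 * f ^ 2 * mlsq) ^ 2 * M2 ^ 2 /
      (64 * f ^ 6 * (M2 ^ 2 - M ^ 2))) := by
    rw [hVPBS, hL]
    field_simp
    ring
  set G : ℝ := 2 * f ^ 2 * (M2 ^ 2 - M ^ 2) + h ^ 2 * M2 ^ 2 with hGdef
  have hG : 0 < G := by
    have h1 : 0 < h ^ 2 * M2 ^ 2 := by positivity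
    have h2 : 0 < 2 * f ^ 2 * (M2 ^ 2 - M ^ 2) := by positivity
    rw [hGdef]; linarith
  have hK2 : K = (v ^ 2 - 4 * f ^ 2 * mlsq) * M2 ^ 2 / (4 * f ^ 2 * G) := by
    rw [hK]
    congr 1
    rw [hGdef]
    field_simp
    ring
  have hcoef : f ^ 2 * (1 - M ^ 2 / M2 ^ 2) + h ^ 2 / 2 = G / (2 * M2 ^ 2) := by
    rw [hGdef]
    field_simp
  have hP : VPPS = -((v ^ 2 - 4 * f ^ 2 * mlsq) ^ 2 * M2 ^ 2 / (16 * f ^ 4 * G)) := by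
    rw [hVPPS, hK2, hcoef]
    field_simp
    ring
  have hd1 : 0 < 64 * f ^ 6 * (M2 ^ 2 - M ^ 2) := by positivity
  have hd2 : 0 < 16 * f ^ 4 * G := by positivity
  rw [hB, hP, neg_lt_neg_iff, div_lt_div_iff₀ hd2 hd1, hGdef]
  have hX : 0 < (v ^ 2 - 4 * f ^ 2 * mlsq) ^ 2 * M2 ^ 2 * (16 * f ^ 4) := by positivity
  have hid : (v ^ 2 - 4 * f ^ 2 * mlsq) ^ 2 * M2 ^ 2 *
        (16 * f ^ 4 * (2 * f ^ 2 * (M2 ^ 2 - M ^ 2) + h ^ 2 * M2 ^ 2)) -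
      (v ^ 2 - 4 * f ^ 2 * mlsq) ^ 2 * M2 ^ 2 * (64 * f ^ 6 * (M2 ^ 2 - M ^ 2)) =
      (v ^ 2 - 4 * f ^ 2 * mlsq) ^ 2 * M2 ^ 2 * (16 * f ^ 4) *
        (h ^ 2 * M2 ^ 2 - 2 * f ^ 2 * (M2 ^ 2 - M ^ 2)) := by ring
  constructor
  · intro hlt
    by_contra hle
    push_neg at hle
    have hle' : h ^ 2 * M2 ^ 2 - 2 * f ^ 2 * (M2 ^ 2 - M ^ 2) ≤ 0 := by linarith
    linarith [mul_nonpos_of_nonneg_of_nonpos hX.le hle', hid]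
  · intro hgt
    have hgt' : 0 < h ^ 2 * M2 ^ 2 - 2 * f ^ 2 * (M2 ^ 2 - M ^ 2) := by linarith
    linarith [mul_pos hX hgt', hid]
end
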